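/- Under the MAR assumption, for cut points c₁ < c₂ and mutually exclusive class indicators D₁, D₂ (D₁D₂ = 0 a.s.), the two mean-zero terms V·1_{T ≥ c₁}·(D₁ − ρ₁) and V·1_{c₁ ≤ T < c₂}·(D₂ − ρ₂) have covariance E[ (V 1_{T ≥ c₁}(D₁ − ρ₁)) · (V 1_{c₁ ≤ T < c₂}(D₂ − ρ₂)) ] = −E[ π · 1_{c₁ ≤ T < c₂} · ρ₁ ρ₂ ]. -/

import Mathlib

open MeasureTheory ProbabilityTheory

/-- Under MAR (with `V` conditionally independent of the pair
`(D₁, D₂)` given `𝒢`), for cut points `c₁ < c₂` and mutually exclusive class indicators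
`D₁, D₂` (`D₁D₂ = 0` a.s.), the two mean-zero terms `V·1_{T ≥ c₁}·(D₁ − ρ₁)` and
`V·1_{c₁ ≤ T < c₂}·(D₂ − ρ₂)` have covariance
`E[(V 1_{T ≥ c₁}(D₁ − ρ₁)) · (V 1_{c₁ ≤ T < c₂}(D₂ − ρ₂))] = −E[π · 1_{c₁ ≤ T < c₂} · ρ₁ρ₂]`. -/
theorem mar_covariance_S_terms
    {Ω : Type*} [mΩ : MeasurableSpace Ω] [StandardBorelSpace Ω] [Nonempty Ω]
    (μ : Measure Ω) [IsProbabilityMeasure μ] {d : ℕ}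
    (T : Ω → ℝ) (A : Ω → (Fin d → ℝ)) (D₁ D₂ V : Ω → ℝ)
    (hT : Measurable T) (hA : Measurable A)
    (hD₁ : Measurable D₁) (hD₂ : Measurable D₂) (hV : Measurable V)
    (hD₁val : ∀ ω, D₁ ω = 0 ∨ D₁ ω = 1) (hD₂val : ∀ ω, D₂ ω = 0 ∨ D₂ ω = 1)
    (hVval : ∀ ω, V ω = 0 ∨ V ω = 1)
    (hexcl : ∀ᵐ ω ∂μ, D₁ ω * D₂ ω = 0)
    (𝒢 : MeasurableSpace Ω)
    (h𝒢 : 𝒢 = MeasurableSpace.comap (fun ω => (T ω, A ω)) inferInstance)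
    (h𝒢le : 𝒢 ≤ mΩ)
    (MAR : CondIndepFun (mΩ := mΩ) 𝒢 h𝒢le V (fun ω => (D₁ ω, D₂ ω)) μ)
    (c₁ c₂ : ℝ) (hc : c₁ < c₂) :
    ∫ ω, (V ω * (if c₁ ≤ T ω then (1 : ℝ) else 0) * (D₁ ω - (μ[D₁ | 𝒢]) ω))
        * (V ω * (if c₁ ≤ T ω ∧ T ω < c₂ then (1 : ℝ) else 0) * (D₂ ω - (μ[D₂ | 𝒢]) ω)) ∂μ
      = - ∫ ω, (μ[V | 𝒢]) ω * (if c₁ ≤ T ω ∧ T ω < c₂ then (1 : ℝ) else 0)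
            * ((μ[D₁ | 𝒢]) ω * (μ[D₂ | 𝒢]) ω) ∂μ := by
  haveI : SigmaFinite (μ.trim h𝒢le) := inferInstance
  set ρ₁ := μ[D₁ | 𝒢] with hρ₁def
  set ρ₂ := μ[D₂ | 𝒢] with hρ₂def
  set π := μ[V | 𝒢] with hπdef
  set g : Ω → ℝ := fun ω => if c₁ ≤ T ω ∧ T ω < c₂ then (1 : ℝ) else 0 with hgdef
  -- basic measurability of g w.r.t. 𝒢
  have hpair : Measurable[𝒢] fun ω => (T ω, A ω) := by
    rw [h𝒢]; exact comap_measurable _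
  have hT𝒢 : Measurable[𝒢] T := (measurable_fst.comp hpair : _)
  have hS : MeasurableSet[𝒢] {ω | c₁ ≤ T ω ∧ T ω < c₂} :=
    (measurableSet_le measurable_const hT𝒢).inter (measurableSet_lt hT𝒢 measurable_const)
  have hg𝒢 : Measurable[𝒢] g := Measurable.ite hS measurable_const measurable_const
  have hgM : Measurable[mΩ] g := fun s hs => h𝒢le _ (hg𝒢 hs)
  have hgval : ∀ ω, g ω = 0 ∨ g ω = 1 := by
    intro ω; by_cases h : c₁ ≤ T ω ∧ T ω < c₂ <;> simp [hgdef, h]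
  -- 0/1-valued functions
  have valmul : ∀ {f h : Ω → ℝ}, (∀ ω, f ω = 0 ∨ f ω = 1) → (∀ ω, h ω = 0 ∨ h ω = 1) →
      ∀ ω, f ω * h ω = 0 ∨ f ω * h ω = 1 := by
    rintro f h hf hh ω
    rcases hf ω with h1 | h1 <;> rcases hh ω with h2 | h2 <;> simp [h1, h2]
  have normle : ∀ x : ℝ, x = 0 ∨ x = 1 → ‖x‖ ≤ 1 := by rintro x (rfl | rfl) <;> simp
  have hbint : ∀ {f : Ω → ℝ}, Measurable[mΩ] f → (∀ ω, ‖f ω‖ ≤ 1) → Integrable f μ := by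
    intro f hf hb
    exact Integrable.mono' (integrable_const (1 : ℝ))
      (hf.aestronglyMeasurable : AEStronglyMeasurable[mΩ] f μ) (ae_of_all _ hb)
  -- a.e. bounds on conditional expectations
  have condbd : ∀ (D : Ω → ℝ), Measurable[mΩ] D → (∀ ω, D ω = 0 ∨ D ω = 1) →
      ∀ᵐ ω ∂μ, ‖(μ[D | 𝒢]) ω‖ ≤ 1 := by
    intro D hD hDval
    have hDi : Integrable D μ := hbint hD (fun ω => normle _ (hDval ω))
    have h0 : 0 ≤ᵐ[μ] μ[D | 𝒢] := condExp_nonneg (ae_of_all _ fun ω => by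
      rcases hDval ω with h | h <;> simp [h])
    have h1 : μ[D | 𝒢] ≤ᵐ[μ] μ[(fun _ => (1 : ℝ)) | 𝒢] :=
      condExp_mono hDi (integrable_const _) (ae_of_all _ fun ω => by
        rcases hDval ω with h | h <;> simp [h])
    rw [condExp_const h𝒢le] at h1
    filter_upwards [h0, h1] with ω hω0 hω1
    simp only [Pi.zero_apply, Pi.one_apply] at hω0 hω1
    rw [Real.norm_eq_abs, abs_le]
    exact ⟨by linarith, hω1⟩
  have hρ₁bd := condbd D₁ hD₁ hD₁val
  have hρ₂bd := condbd D₂ hD₂ hD₂val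
  -- key conditional independence consequences
  have MAR' := (condIndepFun_iff (m' := 𝒢) (mΩ := mΩ) (hm' := h𝒢le) V (fun ω => (D₁ ω, D₂ ω))
    hV (hD₁.prodMk hD₂) μ).mp MAR
  have hkey₁ : μ[(fun ω => V ω * D₁ ω) | 𝒢] =ᵐ[μ] fun ω => π ω * ρ₁ ω := by
    have spec := MAR' (V ⁻¹' {1}) ((fun ω => (D₁ ω, D₂ ω)) ⁻¹' (({1} : Set ℝ) ×ˢ Set.univ))
      ⟨{1}, measurableSet_singleton 1, rfl⟩
      ⟨({1} : Set ℝ) ×ˢ Set.univ, (measurableSet_singleton 1).prod MeasurableSet.univ, rfl⟩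
    have eV : (V ⁻¹' {1}).indicator (fun _ => (1 : ℝ)) = V := by
      funext ω; rcases hVval ω with h | h <;>
        simp [Set.indicator_apply, Set.mem_preimage, h]
    have eD : (((fun ω => (D₁ ω, D₂ ω)) ⁻¹' (({1} : Set ℝ) ×ˢ Set.univ)).indicator
        (fun _ => (1 : ℝ))) = D₁ := by
      funext ω; rcases hD₁val ω with h | h <;>
        simp [Set.indicator_apply, Set.mem_preimage, Set.mem_prod, h]
    have eVD : ((V ⁻¹' {1} ∩ (fun ω => (D₁ ω, D₂ ω)) ⁻¹' (({1} : Set ℝ) ×ˢ Set.univ)).indicator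
        (fun _ => (1 : ℝ))) = fun ω => V ω * D₁ ω := by
      funext ω; rcases hVval ω with h | h <;> rcases hD₁val ω with h' | h' <;>
        simp [Set.indicator_apply, Set.mem_preimage, Set.mem_prod, h, h']
    rw [eV, eD, eVD] at spec
    exact spec
  have hkey₂ : μ[(fun ω => V ω * D₂ ω) | 𝒢] =ᵐ[μ] fun ω => π ω * ρ₂ ω := by
    have spec := MAR' (V ⁻¹' {1}) ((fun ω => (D₁ ω, D₂ ω)) ⁻¹' (Set.univ ×ˢ ({1} : Set ℝ)))
      ⟨{1}, measurableSet_singleton 1, rfl⟩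
      ⟨Set.univ ×ˢ ({1} : Set ℝ), MeasurableSet.univ.prod (measurableSet_singleton 1), rfl⟩
    have eV : (V ⁻¹' {1}).indicator (fun _ => (1 : ℝ)) = V := by
      funext ω; rcases hVval ω with h | h <;>
        simp [Set.indicator_apply, Set.mem_preimage, h]
    have eD : (((fun ω => (D₁ ω, D₂ ω)) ⁻¹' (Set.univ ×ˢ ({1} : Set ℝ))).indicator
        (fun _ => (1 : ℝ))) = D₂ := by
      funext ω; rcases hD₂val ω with h | h <;>
        simp [Set.indicator_apply, Set.mem_preimage, Set.mem_prod, h]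
    have eVD : ((V ⁻¹' {1} ∩ (fun ω => (D₁ ω, D₂ ω)) ⁻¹' (Set.univ ×ˢ ({1} : Set ℝ))).indicator
        (fun _ => (1 : ℝ))) = fun ω => V ω * D₂ ω := by
      funext ω; rcases hVval ω with h | h <;> rcases hD₂val ω with h' | h' <;>
        simp [Set.indicator_apply, Set.mem_preimage, Set.mem_prod, h, h']
    rw [eV, eD, eVD] at spec
    exact spec
  -- pull-out lemma
  have pull : ∀ (h f : Ω → ℝ), StronglyMeasurable[𝒢] h → Integrable f μ →
      Integrable (fun ω => h ω * f ω) μ →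
      ∫ ω, h ω * f ω ∂μ = ∫ ω, h ω * (μ[f | 𝒢]) ω ∂μ := by
    intro h f hh hf hhf
    have hc : μ[h * f | 𝒢] =ᵐ[μ] h * μ[f | 𝒢] :=
      condExp_mul_of_stronglyMeasurable_left hh hhf hf
    calc ∫ ω, h ω * f ω ∂μ = ∫ ω, (μ[h * f | 𝒢]) ω ∂μ := (integral_condExp h𝒢le).symm
      _ = ∫ ω, (h * μ[f | 𝒢]) ω ∂μ := integral_congr_ae hc
      _ = ∫ ω, h ω * (μ[f | 𝒢]) ω ∂μ := rfl
  -- the four pieces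
  set t₁ : Ω → ℝ := fun ω => g ω * (V ω * (D₁ ω * D₂ ω)) with ht₁def
  set t₂ : Ω → ℝ := fun ω => (g ω * ρ₂ ω) * (V ω * D₁ ω) with ht₂def
  set t₃ : Ω → ℝ := fun ω => (g ω * ρ₁ ω) * (V ω * D₂ ω) with ht₃def
  set t₄ : Ω → ℝ := fun ω => (g ω * (ρ₁ ω * ρ₂ ω)) * V ω with ht₄def
  -- integrabilities
  have hVD₁val := valmul hVval hD₁val
  have hVD₂val := valmul hVval hD₂val
  have hVD₁int : Integrable (fun ω => V ω * D₁ ω) μ :=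
    hbint (hV.mul hD₁) (fun ω => normle _ (hVD₁val ω))
  have hVD₂int : Integrable (fun ω => V ω * D₂ ω) μ :=
    hbint (hV.mul hD₂) (fun ω => normle _ (hVD₂val ω))
  have hVint : Integrable V μ := hbint hV (fun ω => normle _ (hVval ω))
  have I1 : Integrable t₁ μ := by
    refine hbint (hgM.mul (hV.mul (hD₁.mul hD₂))) fun ω => normle _ ?_
    exact valmul hgval (valmul hVval (valmul hD₁val hD₂val)) ω
  have hρ₂M : AEStronglyMeasurable[mΩ] ρ₂ μ :=
    (stronglyMeasurable_condExp.mono h𝒢le).aestronglyMeasurable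
  have hρ₁M : AEStronglyMeasurable[mΩ] ρ₁ μ :=
    (stronglyMeasurable_condExp.mono h𝒢le).aestronglyMeasurable
  have I2 : Integrable t₂ μ := by
    have : Integrable (fun ω => ρ₂ ω * (g ω * (V ω * D₁ ω))) μ := by
      refine Integrable.bdd_mul (c := 1)
        (hbint (hgM.mul (hV.mul hD₁)) fun ω => normle _ (valmul hgval hVD₁val ω)) hρ₂M hρ₂bd
    exact this.congr (ae_of_all _ fun ω => by simp [ht₂def]; ring)
  have I3 : Integrable t₃ μ := by
    have : Integrable (fun ω => ρ₁ ω * (g ω * (V ω * D₂ ω))) μ := by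
      refine Integrable.bdd_mul (c := 1)
        (hbint (hgM.mul (hV.mul hD₂)) fun ω => normle _ (valmul hgval hVD₂val ω)) hρ₁M hρ₁bd
    exact this.congr (ae_of_all _ fun ω => by simp [ht₃def]; ring)
  have hρρint : Integrable (fun ω => ρ₁ ω * ρ₂ ω) μ :=
    Integrable.bdd_mul (c := 1) integrable_condExp hρ₁M hρ₁bd
  have I4 : Integrable t₄ μ := by
    have : Integrable (fun ω => (g ω * V ω) * (ρ₁ ω * ρ₂ ω)) μ :=
      Integrable.bdd_mul (c := 1) hρρint
        ((hgM.mul hV).aestronglyMeasurable)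
        (ae_of_all _ fun ω => normle _ (valmul hgval hVval ω))
    exact this.congr (ae_of_all _ fun ω => by simp [ht₄def]; ring)
  -- pointwise identity
  have e : ∀ ω, (V ω * (if c₁ ≤ T ω then (1 : ℝ) else 0) * (D₁ ω - ρ₁ ω))
      * (V ω * (if c₁ ≤ T ω ∧ T ω < c₂ then (1 : ℝ) else 0) * (D₂ ω - ρ₂ ω))
      = t₁ ω - t₂ ω - t₃ ω + t₄ ω := by
    intro ω
    have hv : V ω * V ω = V ω := by rcases hVval ω with h | h <;> simp [h]
    have hig : (if c₁ ≤ T ω then (1 : ℝ) else 0)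
        * (if c₁ ≤ T ω ∧ T ω < c₂ then (1 : ℝ) else 0)
        = (if c₁ ≤ T ω ∧ T ω < c₂ then (1 : ℝ) else 0) := by
      by_cases h : c₁ ≤ T ω ∧ T ω < c₂
      · simp [h, h.1]
      · simp [h]
    simp only [ht₁def, ht₂def, ht₃def, ht₄def, hgdef]
    linear_combination ((if c₁ ≤ T ω then (1 : ℝ) else 0)
        * (if c₁ ≤ T ω ∧ T ω < c₂ then (1 : ℝ) else 0)
        * ((D₁ ω - ρ₁ ω) * (D₂ ω - ρ₂ ω))) * hv
      + (V ω * ((D₁ ω - ρ₁ ω) * (D₂ ω - ρ₂ ω))) * hig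
  -- the values of the four integrals
  set X : ℝ := ∫ ω, π ω * g ω * (ρ₁ ω * ρ₂ ω) ∂μ with hXdef
  have h1 : ∫ ω, t₁ ω ∂μ = 0 := by
    have : t₁ =ᵐ[μ] 0 := by
      filter_upwards [hexcl] with ω hω
      simp [ht₁def, hω]
    exact integral_eq_zero_of_ae this
  have h2 : ∫ ω, t₂ ω ∂μ = X := by
    calc ∫ ω, t₂ ω ∂μ
        = ∫ ω, (g ω * ρ₂ ω) * ((μ[(fun ω => V ω * D₁ ω) | 𝒢]) ω) ∂μ :=
          pull (fun ω => g ω * ρ₂ ω) (fun ω => V ω * D₁ ω)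
            (hg𝒢.stronglyMeasurable.mul stronglyMeasurable_condExp) hVD₁int I2
      _ = ∫ ω, (g ω * ρ₂ ω) * (π ω * ρ₁ ω) ∂μ := by
          refine integral_congr_ae ?_
          filter_upwards [hkey₁] with ω hω
          rw [hω]
      _ = X := by
          rw [hXdef]
          exact integral_congr_ae (ae_of_all _ fun ω => by ring)
  have h3 : ∫ ω, t₃ ω ∂μ = X := by
    calc ∫ ω, t₃ ω ∂μ
        = ∫ ω, (g ω * ρ₁ ω) * ((μ[(fun ω => V ω * D₂ ω) | 𝒢]) ω) ∂μ :=
          pull (fun ω => g ω * ρ₁ ω) (fun ω => V ω * D₂ ω)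
            (hg𝒢.stronglyMeasurable.mul stronglyMeasurable_condExp) hVD₂int I3
      _ = ∫ ω, (g ω * ρ₁ ω) * (π ω * ρ₂ ω) ∂μ := by
          refine integral_congr_ae ?_
          filter_upwards [hkey₂] with ω hω
          rw [hω]
      _ = X := by
          rw [hXdef]
          exact integral_congr_ae (ae_of_all _ fun ω => by ring)
  have h4 : ∫ ω, t₄ ω ∂μ = X := by
    calc ∫ ω, t₄ ω ∂μ
        = ∫ ω, (g ω * (ρ₁ ω * ρ₂ ω)) * ((μ[V | 𝒢]) ω) ∂μ :=
          pull (fun ω => g ω * (ρ₁ ω * ρ₂ ω)) V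
            (hg𝒢.stronglyMeasurable.mul
              (stronglyMeasurable_condExp.mul stronglyMeasurable_condExp)) hVint I4
      _ = X := by
          rw [hXdef]
          exact integral_congr_ae (ae_of_all _ fun ω => by ring)
  show _ = - X
  calc ∫ ω, (V ω * (if c₁ ≤ T ω then (1 : ℝ) else 0) * (D₁ ω - ρ₁ ω))
        * (V ω * (if c₁ ≤ T ω ∧ T ω < c₂ then (1 : ℝ) else 0) * (D₂ ω - ρ₂ ω)) ∂μ
      = ∫ ω, (t₁ ω - t₂ ω - t₃ ω + t₄ ω) ∂μ := integral_congr_ae (ae_of_all _ e)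
    _ = - X := by
        have I12 : Integrable (fun ω => t₁ ω - t₂ ω) μ := I1.sub I2
        have I123 : Integrable (fun ω => t₁ ω - t₂ ω - t₃ ω) μ := I12.sub I3
        have e4 : ∫ ω, (t₁ ω - t₂ ω - t₃ ω + t₄ ω) ∂μ
            = (∫ ω, (t₁ ω - t₂ ω - t₃ ω) ∂μ) + ∫ ω, t₄ ω ∂μ := integral_add I123 I4
        have e3 : ∫ ω, (t₁ ω - t₂ ω - t₃ ω) ∂μ
            = (∫ ω, (t₁ ω - t₂ ω) ∂μ) - ∫ ω, t₃ ω ∂μ := integral_sub I12 I3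
        have e2' : ∫ ω, (t₁ ω - t₂ ω) ∂μ
            = (∫ ω, t₁ ω ∂μ) - ∫ ω, t₂ ω ∂μ := integral_sub I1 I2
        rw [e4, e3, e2', h1, h2, h3, h4]
        ring
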